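/- Fix a constant c ≥ 0. The function g(γ) = (ln(1+γ) − c) / √(1 − (1+γ)^{−2}) is strictly increasing on (0, ∞). Equivalently, writing u = 1+γ, the derivative of u·(ln u − c)/√(u²−1) with respect to u has the sign of u² − 1 − (ln u − c), which is positive for all u > 1 when c ≥ 0. -/

import Mathlib

lemma fbl_key (c : ℝ) (hc : 0 ≤ c) : ∀ u : ℝ, 1 < u → 0 < u ^ 2 - 1 - (Real.log u - c) := by
  intro u hu
  have h1 : Real.log u < u - 1 := Real.log_lt_sub_one_of_pos (by linarith) (by linarith)
  nlinarith

/-- For a fixed constant `c ≥ 0`, the function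
`g(γ) = (ln(1+γ) − c)/√(1 − (1+γ)^{−2})` is strictly increasing on `(0, ∞)`;
moreover (with `u = 1+γ`) the quantity `u² − 1 − (ln u − c)`, which gives the sign
of the derivative of `u·(ln u − c)/√(u²−1)`, is positive for all `u > 1`. -/
theorem fbl_omega_strictMono (c : ℝ) (hc : 0 ≤ c) :
    StrictMonoOn
      (fun γ : ℝ => (Real.log (1 + γ) - c) / Real.sqrt (1 - ((1 + γ) ^ 2)⁻¹))
      (Set.Ioi 0) ∧
    ∀ u : ℝ, 1 < u → 0 < u ^ 2 - 1 - (Real.log u - c) := by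
  refine ⟨?_, fbl_key c hc⟩
  have main : ∀ x : ℝ, x ∈ Set.Ioi (0:ℝ) →
      HasDerivAt (fun γ : ℝ => (Real.log (1 + γ) - c) / Real.sqrt (1 - ((1 + γ) ^ 2)⁻¹))
        ((1/(1+x) * Real.sqrt (1 - ((1+x)^2)⁻¹) -
          (Real.log (1+x) - c) * ((2*(1+x) / ((1+x)^2)^2) /
            (2 * Real.sqrt (1 - ((1+x)^2)⁻¹)))) /
          (Real.sqrt (1 - ((1+x)^2)⁻¹))^2) x := by
    intro x hx
    have hx0 : (0:ℝ) < x := hx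
    have hu : (1:ℝ) < 1 + x := by linarith
    have hu0 : (0:ℝ) < 1 + x := by linarith
    have hw : (0:ℝ) < 1 - ((1+x)^2)⁻¹ := by
      have : ((1+x)^2)⁻¹ < 1 := by
        rw [inv_lt_one_iff₀]; right; nlinarith
      linarith
    have h1 : HasDerivAt (fun γ : ℝ => 1 + γ) 1 x := by
      simpa using (hasDerivAt_id x).const_add 1
    have hN : HasDerivAt (fun γ : ℝ => Real.log (1 + γ) - c) (1/(1+x)) x := by
      have := (Real.hasDerivAt_log (ne_of_gt hu0)).comp x h1
      simpa [div_eq_mul_inv] using this.sub_const c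
    have hsq : HasDerivAt (fun γ : ℝ => (1 + γ)^2) ((2*(1+x))*1) x := by
      simpa using h1.fun_pow 2
    have hinv : HasDerivAt (fun γ : ℝ => ((1 + γ)^2)⁻¹)
        (-((2*(1+x))*1) / ((1+x)^2)^2) x := hsq.inv (by positivity)
    have hwder : HasDerivAt (fun γ : ℝ => 1 - ((1 + γ)^2)⁻¹)
        (-(-((2*(1+x))*1) / ((1+x)^2)^2)) x := hinv.const_sub 1
    have hD : HasDerivAt (fun γ : ℝ => Real.sqrt (1 - ((1 + γ)^2)⁻¹))
        ((-(-((2*(1+x))*1) / ((1+x)^2)^2)) /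
          (2 * Real.sqrt (1 - ((1+x)^2)⁻¹))) x :=
      hwder.sqrt (ne_of_gt hw)
    have := hN.fun_div hD (ne_of_gt (Real.sqrt_pos.mpr hw))
    refine this.congr_deriv ?_
    ring
  apply strictMonoOn_of_deriv_pos (convex_Ioi 0)
  · exact fun x hx => ((main x hx).continuousAt).continuousWithinAt
  · intro x hx
    rw [interior_Ioi] at hx
    rw [(main x hx).deriv]
    have hx0 : (0:ℝ) < x := hx
    have hu : (1:ℝ) < 1 + x := by linarith
    have hu0 : (0:ℝ) < 1 + x := by linarith
    have hw : (0:ℝ) < 1 - ((1+x)^2)⁻¹ := by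
      have : ((1+x)^2)⁻¹ < 1 := by
        rw [inv_lt_one_iff₀]; right; nlinarith
      linarith
    set s := Real.sqrt (1 - ((1+x)^2)⁻¹) with hs
    have hs0 : 0 < s := Real.sqrt_pos.mpr hw
    have hs2 : s^2 = 1 - ((1+x)^2)⁻¹ := Real.sq_sqrt (le_of_lt hw)
    have hkey := fbl_key c hc (1+x) hu
    have hu2s : (1+x)^2 * s^2 = (1+x)^2 - 1 := by
      rw [hs2]
      field_simp
    have hA : 1/(1+x) * s - (Real.log (1+x) - c) * ((2*(1+x) / ((1+x)^2)^2) / (2*s))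
        = ((1+x)^2 * s^2 - (Real.log (1+x) - c)) / ((1+x)^3 * s) := by
      field_simp
    rw [hA]
    apply div_pos
    · apply div_pos
      · rw [hu2s]; linarith
      · positivity
    · positivity
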